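/- Suppose the ternary relation R on subsets of α has monotonicity, finite character, and the countable union property. Then Rᶜ has finite character. -/

import Mathlib

/-- `R A C B` means `A ⫝_C B`.  Monotonicity of a ternary relation. -/
def Mono {α : Type*} (R : Set α → Set α → Set α → Prop) : Prop :=
  ∀ A C B A' B' : Set α, R A C B → A' ⊆ A → B' ⊆ B → R A' C B'

/-- Finite character. -/
def FinChar {α : Type*} (R : Set α → Set α → Set α → Prop) : Prop :=
  ∀ A C B : Set α, (∀ A₀ : Set α, A₀.Finite → A₀ ⊆ A → R A₀ C B) → R A C B

/-- The countable union property. -/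
def CountableUnionProperty {α : Type*} (R : Set α → Set α → Set α → Prop) : Prop :=
  ∀ A B : Set α, A.Countable → B.Countable →
    ∀ C : ℕ → Set α, (⋃ n, C n).Countable → (∀ n, C n ⊆ C (n + 1)) →
      (∀ n, R A (C n) B) → R A (⋃ n, C n) B

/-- The relation `Rᶜ` obtained from `R`. -/
def cBase {α : Type*} (R : Set α → Set α → Set α → Prop) (A C B : Set α) : Prop :=
  ∀ A' B' C' : Set α, A'.Countable → B'.Countable → C'.Countable →
    A' ⊆ A → B' ⊆ B → C' ⊆ C →
    ∃ D : Set α, D.Countable ∧ C' ⊆ D ∧ D ⊆ C ∧ R A' D B'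

theorem stmt8 {α : Type*} (R : Set α → Set α → Set α → Prop)
    (hmono : Mono R) (hfin : FinChar R) (hcu : CountableUnionProperty R) :
    FinChar (cBase R) := by
  intro A C B h
  intro A' B' C' hA'c hB'c hC'c hA'A hB'B hC'C
  rcases A'.eq_empty_or_nonempty with rfl | hne
  · exact h ∅ Set.finite_empty (Set.empty_subset _) ∅ B' C' Set.countable_empty hB'c hC'c
      subset_rfl hB'B hC'C
  · obtain ⟨f, rfl⟩ := Set.Countable.exists_eq_range hA'c hne
    set Aseq : ℕ → Set α := fun n => f '' Set.Iic n with hAseq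
    have hAfin : ∀ n, (Aseq n).Finite := fun n => (Set.finite_Iic n).image f
    have hAsub : ∀ n, Aseq n ⊆ Set.range f := fun n => Set.image_subset_range f _
    have hAmono : ∀ n m, n ≤ m → Aseq n ⊆ Aseq m := fun n m hnm =>
      Set.image_mono (Set.Iic_subset_Iic.mpr hnm)
    have key : ∀ (n : ℕ) (E : Set α), E.Countable → E ⊆ C →
        ∃ D : Set α, D.Countable ∧ E ⊆ D ∧ D ⊆ C ∧ R (Aseq n) D B' := by
      intro n E hEc hEC
      exact h (Aseq n) (hAfin n) ((hAsub n).trans hA'A) (Aseq n) B' E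
        (hAfin n).countable hB'c hEc subset_rfl hB'B hEC
    let base : {E : Set α // E.Countable ∧ E ⊆ C} :=
      ⟨(key 0 C' hC'c hC'C).choose,
        (key 0 C' hC'c hC'C).choose_spec.1,
        (key 0 C' hC'c hC'C).choose_spec.2.2.1⟩
    let step : ℕ → {E : Set α // E.Countable ∧ E ⊆ C} → {E : Set α // E.Countable ∧ E ⊆ C} :=
      fun n p => ⟨(key (n+1) p.1 p.2.1 p.2.2).choose,
        (key (n+1) p.1 p.2.1 p.2.2).choose_spec.1,
        (key (n+1) p.1 p.2.1 p.2.2).choose_spec.2.2.1⟩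
    let D : ℕ → {E : Set α // E.Countable ∧ E ⊆ C} := fun n => Nat.rec base step n
    have hC'D0 : C' ⊆ (D 0).1 := (key 0 C' hC'c hC'C).choose_spec.2.1
    have hD0R : R (Aseq 0) (D 0).1 B' := (key 0 C' hC'c hC'C).choose_spec.2.2.2
    have hDstep : ∀ n, (D n).1 ⊆ (D (n+1)).1 ∧ R (Aseq (n+1)) (D (n+1)).1 B' := by
      intro n
      have := (key (n+1) (D n).1 (D n).2.1 (D n).2.2).choose_spec
      exact ⟨this.2.1, this.2.2.2⟩
    have hDR : ∀ n, R (Aseq n) (D n).1 B' := by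
      intro n
      cases n with
      | zero => exact hD0R
      | succ n => exact (hDstep n).2
    have hDmono : ∀ n m, n ≤ m → (D n).1 ⊆ (D m).1 := by
      intro n m hnm
      induction m, hnm using Nat.le_induction with
      | base => exact subset_rfl
      | succ m hnm ih => exact ih.trans (hDstep m).1
    refine ⟨⋃ n, (D n).1, Set.countable_iUnion (fun n => (D n).2.1),
      hC'D0.trans (Set.subset_iUnion (fun n => (D n).1) 0),
      Set.iUnion_subset (fun n => (D n).2.2), ?_⟩
    apply hfin
    intro F hFfin hFsub
    have exists_n : ∀ F : Set α, F.Finite → F ⊆ Set.range f → ∃ n, F ⊆ Aseq n := by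
      intro F hF
      refine Set.Finite.induction_on (motive := fun F _ => F ⊆ Set.range f → ∃ n, F ⊆ Aseq n) F hF
        (fun _ => ⟨0, Set.empty_subset _⟩) ?_
      intro a s _ _ ih hsub
      obtain ⟨n, hn⟩ := ih ((Set.subset_insert _ _).trans hsub)
      obtain ⟨k, hk⟩ := hsub (Set.mem_insert _ _)
      refine ⟨max n k, fun y hy => ?_⟩
      rcases hy with rfl | hy
      · exact ⟨k, Set.mem_Iic.mpr (le_max_right n k), hk⟩
      · exact hAmono n (max n k) (le_max_left n k) (hn hy)
    obtain ⟨n, hFn⟩ := exists_n F hFfin hFsub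
    have hcu' := hcu F B' hFfin.countable hB'c (fun m => (D (n+m)).1)
      (Set.countable_iUnion (fun m => (D (n+m)).2.1))
      (fun m => hDmono (n+m) (n+m+1) (by omega))
      (fun m => hmono (Aseq (n+m)) ((D (n+m)).1) B' F B' (hDR (n+m))
        (hFn.trans (hAmono n (n+m) (by omega))) subset_rfl)
    have hEq : (⋃ m, (D (n+m)).1) = ⋃ m, (D m).1 := by
      apply Set.Subset.antisymm
      · exact Set.iUnion_subset fun m => Set.subset_iUnion (fun k => (D k).1) (n+m)
      · exact Set.iUnion_subset fun m =>
          (hDmono m (n+m) (by omega)).trans (Set.subset_iUnion (fun k => (D (n+k)).1) m)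
    exact hEq ▸ hcu'
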